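/- Every Sasaki space is a Dacey space: if (X,⊥) is an orthoset such that every orthoclosed subset admits a Sasaki map, then the ortholattice C(X,⊥) of orthoclosed subsets is orthomodular. -/
import Mathlib


/-- The set of elements orthogonal to every element of `A`. -/
def perpSet {X : Type*} (perp : X → X → Prop) (A : Set X) : Set X :=
  {x | ∀ a ∈ A, perp x a}

/-- A subset is orthoclosed if it equals its double orthocomplement. -/
def Orthoclosed {X : Type*} (perp : X → X → Prop) (A : Set X) : Prop :=
  perpSet perp (perpSet perp A) = A

/-- `φ` (restricted to `∁(A^⊥)`) is a Sasaki map to the orthoclosed set `A`. -/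
def IsSasakiMap {X : Type*} (perp : X → X → Prop) (A : Set X) (φ : X → X) : Prop :=
  (∀ e ∈ (perpSet perp A)ᶜ, φ e ∈ A) ∧
  (∀ e ∈ A, φ e = e) ∧
  (∀ e ∈ (perpSet perp A)ᶜ, ∀ f ∈ (perpSet perp A)ᶜ, (perp (φ e) f ↔ perp e (φ f)))

/-- A Sasaki space: every orthoclosed subset admits a Sasaki map. -/
def IsSasakiSpace {X : Type*} (perp : X → X → Prop) : Prop :=
  ∀ A : Set X, Orthoclosed perp A → ∃ φ : X → X, IsSasakiMap perp A φ

lemma perpSet_anti {X : Type*} (perp : X → X → Prop) {A B : Set X} (h : A ⊆ B) :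
    perpSet perp B ⊆ perpSet perp A := fun x hx a ha => hx a (h ha)

lemma subset_biperp {X : Type*} (perp : X → X → Prop)
    (hsymm : ∀ x y, perp x y → perp y x) (A : Set X) :
    A ⊆ perpSet perp (perpSet perp A) := fun a ha y hy => hsymm _ _ (hy a ha)

lemma orthoclosed_perpSet {X : Type*} (perp : X → X → Prop)
    (hsymm : ∀ x y, perp x y → perp y x) (A : Set X) :
    Orthoclosed perp (perpSet perp A) := by
  apply Set.Subset.antisymm
  · exact perpSet_anti perp (subset_biperp perp hsymm A)
  · exact subset_biperp perp hsymm _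

/-- every Sasaki space is a Dacey space, i.e. the ortholattice of
orthoclosed subsets is orthomodular: for orthoclosed `A ⊆ B`,
`B = A ∨ (B ∧ A^⊥)` (the join being the double orthocomplement of the union). -/
theorem sasakiSpace_is_daceySpace {X : Type*} (perp : X → X → Prop)
    (hsymm : ∀ x y, perp x y → perp y x) (hirrefl : ∀ x, ¬ perp x x)
    (hSasaki : IsSasakiSpace perp) :
    ∀ A B : Set X, Orthoclosed perp A → Orthoclosed perp B → A ⊆ B →
      B = perpSet perp (perpSet perp (A ∪ (B ∩ perpSet perp A))) := by
  intro A B hA hB hAB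
  set S : Set X := A ∪ (B ∩ perpSet perp A) with hS
  have hSB : S ⊆ B := by
    rintro x (hx | hx)
    · exact hAB hx
    · exact hx.1
  apply Set.Subset.antisymm
  · -- B ⊆ S^⊥⊥
    obtain ⟨φ, hφ1, hφ2, hφ3⟩ := hSasaki (perpSet perp A) (orthoclosed_perpSet perp hsymm A)
    -- domain: complement of (A^⊥)^⊥ = complement of A (since A orthoclosed)
    have hdom : (perpSet perp (perpSet perp A))ᶜ = Aᶜ := by rw [hA]
    intro b hb y hy
    -- hy : y ∈ perpSet S
    have hyA : y ∈ perpSet perp A := fun a ha => hy a (Or.inl ha)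
    have hynA : y ∉ A := fun h => hirrefl y (hyA y h)
    by_cases hbA : b ∈ A
    · exact hsymm _ _ (hy b (Or.inl hbA))
    · have hb' : b ∈ (perpSet perp (perpSet perp A))ᶜ := by rw [hdom]; exact hbA
      have hφbA : φ b ∈ perpSet perp A := hφ1 b hb'
      -- φ b ∈ B
      have hφbB : φ b ∈ B := by
        rw [← hB]
        intro z hz
        have hzA : z ∉ A := by
          intro h
          exact hirrefl z (hz z (hAB h))
        have hz' : z ∈ (perpSet perp (perpSet perp A))ᶜ := by rw [hdom]; exact hzA
        have hzPA : z ∈ perpSet perp A := fun a ha => hz a (hAB ha)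
        have := (hφ3 b hb' z hz').mpr
        rw [hφ2 z hzPA] at this
        exact this (hsymm _ _ (hz b hb))
      have hyφb : perp y (φ b) := hy (φ b) (Or.inr ⟨hφbB, hφbA⟩)
      have hy' : y ∈ (perpSet perp (perpSet perp A))ᶜ := by rw [hdom]; exact hynA
      have := (hφ3 y hy' b hb').mpr hyφb
      rw [hφ2 y hyA] at this
      exact hsymm _ _ this
  · -- S^⊥⊥ ⊆ B^⊥⊥ = B
    calc perpSet perp (perpSet perp S)
        ⊆ perpSet perp (perpSet perp B) := perpSet_anti perp (perpSet_anti perp hSB)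
      _ = B := hB
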